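/- Let $H\in(1/2,1)$ be fixed and define $C_{\infty,H}(\tau):=e^{-\tau}\frac{\int_0^\infty\int_{-\tau}^\infty e^{-u}e^{-v}|u-v|^{2H-2}\,du\,dv}{\int_0^\infty\int_0^\infty e^{-u}e^{-v}|u-v|^{2H-2}\,du\,dv}$ for $\tau\ge 0$. Then $\lim_{\tau\to\infty}\tau^{2-2H} C_{\infty,H}(\tau)\cdot\left(\int_0^\infty\int_0^\infty e^{-u}e^{-v}|u-v|^{2H-2}dudv\right)=1$; in particular $C_{\infty,H}$ is not integrable on $[0,\infty)$. -/

import Mathlib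

open MeasureTheory Real Set Filter
open scoped ENNReal Topology

/-- The limiting correlation function `C_{∞,H}`. -/
noncomputable def CinftyH (H τ : ℝ) : ℝ :=
  Real.exp (-τ) *
    (∫⁻ u in Ioi (0:ℝ), ∫⁻ v in Ioi (-τ),
        ENNReal.ofReal (Real.exp (-u) * Real.exp (-v) * |u - v| ^ (2*H - 2))).toReal /
    (∫⁻ u in Ioi (0:ℝ), ∫⁻ v in Ioi (0:ℝ),
        ENNReal.ofReal (Real.exp (-u) * Real.exp (-v) * |u - v| ^ (2*H - 2))).toReal

namespace Stmt7Aux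

/-- The shifted kernel integral. -/
noncomputable def G (H τ : ℝ) : ℝ≥0∞ :=
  ∫⁻ u in Ioi (0:ℝ), ∫⁻ w in Ioi (0:ℝ),
    ENNReal.ofReal (Real.exp (-u) * Real.exp (-w) * |u - w + τ| ^ (2*H - 2))

/-- The product measure. -/
noncomputable def mu2 : Measure (ℝ × ℝ) :=
  (volume.restrict (Ioi 0)).prod (volume.restrict (Ioi 0))

/-- The rescaled kernel on the product space. -/
noncomputable def Phi (H τ : ℝ) (p : ℝ × ℝ) : ℝ≥0∞ :=
  ENNReal.ofReal (Real.exp (-p.1) * Real.exp (-p.2) *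
    (τ ^ (2 - 2*H) * |p.1 - p.2 + τ| ^ (2*H - 2)))

/-- The "good" region. -/
def Eset (τ : ℝ) : Set (ℝ × ℝ) := {p | p.2 ≤ p.1 + τ/2}

lemma hE (τ : ℝ) : MeasurableSet (Eset τ) :=
  measurableSet_le measurable_snd (measurable_fst.add_const _)

lemma ae_mem_S : ∀ᵐ p ∂mu2, p.1 ∈ Ioi (0:ℝ) ∧ p.2 ∈ Ioi (0:ℝ) := by
  rw [mu2, Measure.prod_restrict]
  filter_upwards [ae_restrict_mem (measurableSet_Ioi.prod measurableSet_Ioi)] with p hp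
  exact hp

lemma lint_exp (c : ℝ) (hc : 0 < c) :
    ∫⁻ x in Ioi (0:ℝ), ENNReal.ofReal (Real.exp (-(c*x))) = ENNReal.ofReal (1/c) := by
  rw [← ofReal_integral_eq_lintegral_ofReal]
  · congr 1
    rw [MeasureTheory.integral_comp_mul_left_Ioi (fun y => Real.exp (-y)) 0 hc]
    simp [integral_exp_neg_Ioi, abs_of_pos hc, smul_eq_mul, integral_exp_Iic_zero]
  · simpa [neg_mul, IntegrableOn] using exp_neg_integrableOn_Ioi 0 hc
  · filter_upwards with x using (Real.exp_pos _).le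

lemma lint_exp_one : ∫⁻ x in Ioi (0:ℝ), ENNReal.ofReal (Real.exp (-x)) = 1 := by
  have := lint_exp 1 one_pos
  simpa using this

variable {H : ℝ}

lemma lint_rpow_core (hH1 : 1/2 < H) (hH2 : H < 1) :
    ∫⁻ y in Ioo (0:ℝ) 1, ENNReal.ofReal (|y| ^ (2*H - 2)) = ENNReal.ofReal (1/(2*H-1)) := by
  have h1 : ∫⁻ y in Ioo (0:ℝ) 1, ENNReal.ofReal (|y| ^ (2*H - 2))
      = ∫⁻ y in Ioo (0:ℝ) 1, ENNReal.ofReal (y ^ (2*H - 2)) := by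
    refine setLIntegral_congr_fun measurableSet_Ioo ?_
    intro y hy
    dsimp only
    rw [abs_of_pos hy.1]
  rw [h1, ← ofReal_integral_eq_lintegral_ofReal]
  · congr 1
    rw [← MeasureTheory.integral_Ioc_eq_integral_Ioo,
      ← intervalIntegral.integral_of_le zero_le_one,
      integral_rpow (Or.inl (by linarith))]
    rw [Real.one_rpow, Real.zero_rpow (by linarith)]
    norm_num
    ring_nf
  · have := intervalIntegral.intervalIntegrable_rpow' (a := 0) (b := 1)
      (r := 2*H - 2) (by linarith)
    rw [intervalIntegrable_iff_integrableOn_Ioc_of_le zero_le_one] at this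
    exact this.mono_set Ioo_subset_Ioc_self
  · filter_upwards [ae_restrict_mem measurableSet_Ioo] with y hy
    exact Real.rpow_nonneg hy.1.le _

lemma lint_rpow_near (hH1 : 1/2 < H) (hH2 : H < 1) (a : ℝ) :
    ∫⁻ w in Ioo (a-1) (a+1), ENNReal.ofReal (|w - a| ^ (2*H - 2))
      ≤ ENNReal.ofReal (2/(2*H-1)) := by
  have h1 : ∫⁻ w in Ioo (a-1) (a+1), ENNReal.ofReal (|w - a| ^ (2*H - 2))
      = ∫⁻ y in Ioo (-1:ℝ) 1, ENNReal.ofReal (|y| ^ (2*H - 2)) := by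
    rw [← MeasurePreserving.setLIntegral_comp_preimage_emb
      (measurePreserving_add_right volume a) (measurableEmbedding_addRight a)
      (fun x => ENNReal.ofReal (|x - a| ^ (2*H - 2))) (Ioo (a-1) (a+1))]
    have hpre : ((· + a) ⁻¹' Ioo (a-1) (a+1)) = Ioo (-1:ℝ) 1 := by
      ext x
      simp only [mem_preimage, mem_Ioo]
      constructor <;> intro h <;> constructor <;> linarith [h.1, h.2]
    rw [hpre]
    apply lintegral_congr fun y => ?_
    simp
  have h2 : ∫⁻ y in Ioo (-1:ℝ) 0, ENNReal.ofReal (|y| ^ (2*H - 2))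
      = ∫⁻ y in Ioo (0:ℝ) 1, ENNReal.ofReal (|y| ^ (2*H - 2)) := by
    rw [← MeasurePreserving.setLIntegral_comp_preimage_emb
      (Measure.measurePreserving_neg (volume : Measure ℝ))
      (MeasurableEquiv.neg ℝ).measurableEmbedding
      (fun x => ENNReal.ofReal (|x| ^ (2*H - 2))) (Ioo (-1:ℝ) 0)]
    have hpre : ((fun x : ℝ => -x) ⁻¹' Ioo (-1:ℝ) 0) = Ioo (0:ℝ) 1 := by
      ext x
      simp only [mem_preimage, mem_Ioo]
      constructor <;> intro h <;> constructor <;> linarith [h.1, h.2]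
    have hpre' : (Neg.neg ⁻¹' Ioo (-1:ℝ) 0) = Ioo (0:ℝ) 1 := hpre
    rw [hpre']
    apply lintegral_congr fun y => ?_
    simp
  have hsub : Ioo (-1:ℝ) 1 ⊆ Ioo (-1:ℝ) 0 ∪ Ico (0:ℝ) 1 := by
    intro x hx
    rcases lt_or_ge x 0 with h | h
    · exact Or.inl ⟨hx.1, h⟩
    · exact Or.inr ⟨h, hx.2⟩
  have h3 : ∫⁻ y in Ico (0:ℝ) 1, ENNReal.ofReal (|y| ^ (2*H - 2))
      = ∫⁻ y in Ioo (0:ℝ) 1, ENNReal.ofReal (|y| ^ (2*H - 2)) :=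
    (setLIntegral_congr Ioo_ae_eq_Ico).symm
  calc ∫⁻ w in Ioo (a-1) (a+1), ENNReal.ofReal (|w - a| ^ (2*H - 2))
      = ∫⁻ y in Ioo (-1:ℝ) 1, ENNReal.ofReal (|y| ^ (2*H - 2)) := h1
    _ ≤ ∫⁻ y in Ioo (-1:ℝ) 0 ∪ Ico (0:ℝ) 1, ENNReal.ofReal (|y| ^ (2*H - 2)) :=
        lintegral_mono_set hsub
    _ ≤ (∫⁻ y in Ioo (-1:ℝ) 0, ENNReal.ofReal (|y| ^ (2*H - 2)))
        + ∫⁻ y in Ico (0:ℝ) 1, ENNReal.ofReal (|y| ^ (2*H - 2)) := lintegral_union_le _ _ _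
    _ = ENNReal.ofReal (1/(2*H-1)) + ENNReal.ofReal (1/(2*H-1)) := by
        rw [h2, h3, lint_rpow_core hH1 hH2]
    _ = ENNReal.ofReal (2/(2*H-1)) := by
        rw [← ENNReal.ofReal_add (div_nonneg one_pos.le (by linarith)) (div_nonneg one_pos.le (by linarith))]
        ring_nf
    _ ≤ ENNReal.ofReal (2/(2*H-1)) := le_rfl

lemma inner_bound (hH1 : 1/2 < H) (hH2 : H < 1) {c : ℝ} (hc : 0 < c) (a : ℝ) :
    ∫⁻ w in Ioi (0:ℝ), ENNReal.ofReal (Real.exp (-(c*w)) * |w - a| ^ (2*H - 2))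
      ≤ ENNReal.ofReal (1/c + 2/(2*H-1)) := by
  have key : ∀ w ∈ Ioi (0:ℝ),
      ENNReal.ofReal (Real.exp (-(c*w)) * |w - a| ^ (2*H - 2))
        ≤ ENNReal.ofReal (Real.exp (-(c*w)))
          + (Ioo (a-1) (a+1)).indicator (fun w => ENNReal.ofReal (|w - a| ^ (2*H - 2))) w := by
    intro w hw
    rcases le_or_gt 1 |w - a| with h | h
    · have h1 : |w - a| ^ (2*H - 2) ≤ 1 :=
        Real.rpow_le_one_of_one_le_of_nonpos h (by linarith)
      refine le_trans ?_ le_self_add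
      exact ENNReal.ofReal_le_ofReal
        (mul_le_of_le_one_right (Real.exp_pos _).le h1)
    · have hmem : w ∈ Ioo (a-1) (a+1) := by
        rw [abs_lt] at h
        constructor <;> [linarith [h.1]; linarith [h.2]]
      refine le_trans ?_ le_add_self
      rw [indicator_of_mem hmem]
      refine ENNReal.ofReal_le_ofReal ?_
      have : Real.exp (-(c*w)) ≤ 1 := by
        rw [Real.exp_le_one_iff]
        have : (0:ℝ) < w := hw
        nlinarith
      exact mul_le_of_le_one_left (Real.rpow_nonneg (abs_nonneg _) _) this
  calc ∫⁻ w in Ioi (0:ℝ), ENNReal.ofReal (Real.exp (-(c*w)) * |w - a| ^ (2*H - 2))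
      ≤ ∫⁻ w in Ioi (0:ℝ), (ENNReal.ofReal (Real.exp (-(c*w)))
          + (Ioo (a-1) (a+1)).indicator (fun w => ENNReal.ofReal (|w - a| ^ (2*H - 2))) w) :=
        setLIntegral_mono' measurableSet_Ioi key
    _ = (∫⁻ w in Ioi (0:ℝ), ENNReal.ofReal (Real.exp (-(c*w))))
        + ∫⁻ w in Ioi (0:ℝ),
            (Ioo (a-1) (a+1)).indicator (fun w => ENNReal.ofReal (|w - a| ^ (2*H - 2))) w := by
        apply lintegral_add_left
        fun_prop
    _ ≤ ENNReal.ofReal (1/c) + ENNReal.ofReal (2/(2*H-1)) := by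
        refine add_le_add (le_of_eq (lint_exp c hc)) ?_
        refine le_trans (setLIntegral_le_lintegral _ _) ?_
        rw [lintegral_indicator measurableSet_Ioo]
        exact lint_rpow_near hH1 hH2 a
    _ = ENNReal.ofReal (1/c + 2/(2*H-1)) :=
        (ENNReal.ofReal_add (by positivity) (div_nonneg (by norm_num) (by linarith))).symm

lemma G_le (hH1 : 1/2 < H) (hH2 : H < 1) (τ : ℝ) :
    G H τ ≤ ENNReal.ofReal (1 + 2/(2*H-1)) := by
  have hinner : ∀ u : ℝ,
      (∫⁻ w in Ioi (0:ℝ),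
        ENNReal.ofReal (Real.exp (-u) * Real.exp (-w) * |u - w + τ| ^ (2*H - 2)))
      ≤ ENNReal.ofReal (Real.exp (-u)) * ENNReal.ofReal (1 + 2/(2*H-1)) := by
    intro u
    have heq : ∀ w : ℝ,
        ENNReal.ofReal (Real.exp (-u) * Real.exp (-w) * |u - w + τ| ^ (2*H - 2))
          = ENNReal.ofReal (Real.exp (-u))
            * ENNReal.ofReal (Real.exp (-(1*w)) * |w - (u+τ)| ^ (2*H - 2)) := by
      intro w
      rw [← ENNReal.ofReal_mul (Real.exp_pos _).le]
      congr 1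
      rw [show u - w + τ = -(w - (u+τ)) by ring, abs_neg, one_mul]
      ring
    calc (∫⁻ w in Ioi (0:ℝ),
          ENNReal.ofReal (Real.exp (-u) * Real.exp (-w) * |u - w + τ| ^ (2*H - 2)))
        = ENNReal.ofReal (Real.exp (-u))
            * ∫⁻ w in Ioi (0:ℝ),
                ENNReal.ofReal (Real.exp (-(1*w)) * |w - (u+τ)| ^ (2*H - 2)) := by
          rw [← lintegral_const_mul' _ _ ENNReal.ofReal_ne_top]
          exact lintegral_congr heq
      _ ≤ ENNReal.ofReal (Real.exp (-u)) * ENNReal.ofReal (1 + 2/(2*H-1)) := by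
          refine mul_le_mul' le_rfl ?_
          have := inner_bound hH1 hH2 one_pos (u + τ)
          simpa using this
  calc G H τ ≤ ∫⁻ u in Ioi (0:ℝ),
        ENNReal.ofReal (Real.exp (-u)) * ENNReal.ofReal (1 + 2/(2*H-1)) :=
        lintegral_mono hinner
    _ = (∫⁻ u in Ioi (0:ℝ), ENNReal.ofReal (Real.exp (-u)))
        * ENNReal.ofReal (1 + 2/(2*H-1)) := lintegral_mul_const' _ _ ENNReal.ofReal_ne_top
    _ = ENNReal.ofReal (1 + 2/(2*H-1)) := by rw [lint_exp_one, one_mul]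

lemma G_pos (hH1 : 1/2 < H) (hH2 : H < 1) : 0 < G H 0 := by
  set c : ℝ := Real.exp (-1) * Real.exp (-3) * (3:ℝ) ^ (2*H - 2) with hc
  have hc0 : 0 < c := by
    have : (0:ℝ) < (3:ℝ) ^ (2*H - 2) := Real.rpow_pos_of_pos (by norm_num) _
    positivity
  have hkey : ∀ u ∈ Ioo (0:ℝ) 1, ∀ w ∈ Ioo (2:ℝ) 3,
      c ≤ Real.exp (-u) * Real.exp (-w) * |u - w + 0| ^ (2*H - 2) := by
    intro u hu w hw
    have h1 : |u - w + 0| = w - u := by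
      rw [add_zero, abs_of_neg (by linarith [hu.2, hw.1] : u - w < 0)]
      ring
    rw [h1]
    have h2 : (3:ℝ) ^ (2*H - 2) ≤ (w - u) ^ (2*H - 2) := by
      apply Real.rpow_le_rpow_of_nonpos (by linarith [hu.2, hw.1]) (by linarith [hu.1, hw.2])
      linarith
    have h3 : Real.exp (-1) ≤ Real.exp (-u) := Real.exp_le_exp.2 (by linarith [hu.2])
    have h4 : Real.exp (-3) ≤ Real.exp (-w) := Real.exp_le_exp.2 (by linarith [hw.2])
    have h5 : (0:ℝ) ≤ (3:ℝ) ^ (2*H - 2) := Real.rpow_nonneg (by norm_num) _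
    calc c = Real.exp (-1) * Real.exp (-3) * (3:ℝ) ^ (2*H - 2) := hc
      _ ≤ Real.exp (-u) * Real.exp (-w) * (w - u) ^ (2*H - 2) := by
          apply mul_le_mul (mul_le_mul h3 h4 (Real.exp_pos _).le (Real.exp_pos _).le) h2 h5
          positivity
  have hlow : ENNReal.ofReal c ≤ G H 0 := by
    calc ENNReal.ofReal c = ENNReal.ofReal c * volume (Ioo (0:ℝ) 1) := by
          rw [Real.volume_Ioo]
          norm_num
      _ = ∫⁻ _ in Ioo (0:ℝ) 1, ENNReal.ofReal c := (setLIntegral_const _ _).symm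
      _ ≤ ∫⁻ u in Ioo (0:ℝ) 1, ∫⁻ w in Ioi (0:ℝ),
            ENNReal.ofReal (Real.exp (-u) * Real.exp (-w) * |u - w + 0| ^ (2*H - 2)) := by
          refine setLIntegral_mono' measurableSet_Ioo fun u hu => ?_
          calc (ENNReal.ofReal c : ℝ≥0∞)
              = ENNReal.ofReal c * volume (Ioo (2:ℝ) 3) := by rw [Real.volume_Ioo]; norm_num
            _ = ∫⁻ _ in Ioo (2:ℝ) 3, ENNReal.ofReal c := (setLIntegral_const _ _).symm
            _ ≤ ∫⁻ w in Ioo (2:ℝ) 3,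
                  ENNReal.ofReal (Real.exp (-u) * Real.exp (-w) * |u - w + 0| ^ (2*H - 2)) :=
                setLIntegral_mono' measurableSet_Ioo fun w hw =>
                  ENNReal.ofReal_le_ofReal (hkey u hu w hw)
            _ ≤ ∫⁻ w in Ioi (0:ℝ),
                  ENNReal.ofReal (Real.exp (-u) * Real.exp (-w) * |u - w + 0| ^ (2*H - 2)) :=
                lintegral_mono_set (fun x hx => lt_trans (by norm_num) hx.1)
      _ ≤ G H 0 := lintegral_mono_set (fun x hx => hx.1)
  exact lt_of_lt_of_le (ENNReal.ofReal_pos.2 hc0) hlow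

lemma sub_lemma (τ u : ℝ) :
    (∫⁻ v in Ioi (-τ),
        ENNReal.ofReal (Real.exp (-u) * Real.exp (-v) * |u - v| ^ (2*H - 2)))
    = ENNReal.ofReal (Real.exp τ) * ∫⁻ w in Ioi (0:ℝ),
        ENNReal.ofReal (Real.exp (-u) * Real.exp (-w) * |u - w + τ| ^ (2*H - 2)) := by
  rw [← MeasurePreserving.setLIntegral_comp_preimage_emb
    (measurePreserving_add_right volume (-τ)) (measurableEmbedding_addRight (-τ))
    (fun v => ENNReal.ofReal (Real.exp (-u) * Real.exp (-v) * |u - v| ^ (2*H - 2)))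
    (Ioi (-τ))]
  have hpre : ((· + (-τ)) ⁻¹' Ioi (-τ)) = Ioi (0:ℝ) := by
    ext x
    simp
  rw [hpre, ← lintegral_const_mul' _ _ ENNReal.ofReal_ne_top]
  apply lintegral_congr fun w => ?_
  rw [← ENNReal.ofReal_mul (Real.exp_pos τ).le]
  congr 1
  rw [show u - (w + -τ) = u - w + τ by ring,
    show -(w + -τ) = τ + -w by ring, Real.exp_add]
  ring

lemma N_eq (τ : ℝ) :
    (∫⁻ u in Ioi (0:ℝ), ∫⁻ v in Ioi (-τ),
        ENNReal.ofReal (Real.exp (-u) * Real.exp (-v) * |u - v| ^ (2*H - 2)))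
    = ENNReal.ofReal (Real.exp τ) * G H τ := by
  rw [G, ← lintegral_const_mul' _ _ ENNReal.ofReal_ne_top]
  exact lintegral_congr fun u => sub_lemma τ u

lemma Gprod (τ : ℝ) :
    G H τ = ∫⁻ p, ENNReal.ofReal
      (Real.exp (-p.1) * Real.exp (-p.2) * |p.1 - p.2 + τ| ^ (2*H - 2)) ∂mu2 := by
  rw [G, mu2]
  exact lintegral_lintegral (by fun_prop)

lemma Lprod {τ : ℝ} (hτ : 0 < τ) :
    ENNReal.ofReal (τ ^ (2 - 2*H)) * G H τ = ∫⁻ p, Phi H τ p ∂mu2 := by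
  rw [Gprod, ← lintegral_const_mul' _ _ ENNReal.ofReal_ne_top]
  apply lintegral_congr fun p => ?_
  rw [Phi, ← ENNReal.ofReal_mul (Real.rpow_nonneg hτ.le _)]
  congr 1
  ring

lemma rpow_lim (c : ℝ) :
    Tendsto (fun τ : ℝ => τ ^ (2 - 2*H) * |c + τ| ^ (2*H - 2)) atTop (𝓝 1) := by
  have h0 : Tendsto (fun τ : ℝ => 1 + c/τ) atTop (𝓝 1) := by
    have h := (tendsto_const_nhds (x := c) (f := atTop)).div_atTop tendsto_id
    simpa using tendsto_const_nhds.add h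
  have h1 : Tendsto (fun τ : ℝ => (1 + c/τ) ^ (2*H - 2)) atTop (𝓝 1) := by
    have := h0.rpow_const (p := 2*H - 2) (Or.inl one_ne_zero)
    simpa using this
  apply h1.congr'
  filter_upwards [eventually_gt_atTop |c|] with τ hτ
  have hτ0 : 0 < τ := lt_of_le_of_lt (abs_nonneg c) hτ
  have hct : 0 < c + τ := by
    have := neg_abs_le c
    linarith
  rw [abs_of_pos hct, show 1 + c/τ = (c+τ)/τ by field_simp; ring,
    Real.div_rpow hct.le hτ0.le, show (2:ℝ) - 2*H = -(2*H - 2) by ring,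
    Real.rpow_neg hτ0.le, div_eq_mul_inv, mul_comm]

lemma Phi_lim (p : ℝ × ℝ) :
    Tendsto (fun τ => Phi H τ p) atTop
      (𝓝 (ENNReal.ofReal (Real.exp (-p.1) * Real.exp (-p.2)))) := by
  have h1 : Tendsto (fun τ : ℝ => Real.exp (-p.1) * Real.exp (-p.2)
      * (τ ^ (2 - 2*H) * |p.1 - p.2 + τ| ^ (2*H - 2))) atTop
      (𝓝 (Real.exp (-p.1) * Real.exp (-p.2))) := by
    have := (tendsto_const_nhds
      (x := Real.exp (-p.1) * Real.exp (-p.2)) (f := atTop)).mul (rpow_lim (H := H) (p.1 - p.2))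
    simpa using this
  exact (ENNReal.continuous_ofReal.tendsto _).comp h1

lemma bound_int :
    ∫⁻ p, ENNReal.ofReal (2 * Real.exp (-p.1)) * ENNReal.ofReal (Real.exp (-p.2)) ∂mu2
      = 2 := by
  rw [mu2]
  have hsplit : (∫⁻ p : ℝ × ℝ, ENNReal.ofReal (2 * Real.exp (-p.1))
      * ENNReal.ofReal (Real.exp (-p.2))
      ∂((volume.restrict (Ioi 0)).prod (volume.restrict (Ioi 0))))
      = (∫⁻ u in Ioi (0:ℝ), ENNReal.ofReal (2 * Real.exp (-u)))
        * ∫⁻ v in Ioi (0:ℝ), ENNReal.ofReal (Real.exp (-v)) :=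
    lintegral_prod_mul (f := fun u => ENNReal.ofReal (2 * Real.exp (-u)))
      (g := fun v => ENNReal.ofReal (Real.exp (-v))) (by fun_prop) (by fun_prop)
  rw [hsplit]
  have h1 : ∫⁻ u in Ioi (0:ℝ), ENNReal.ofReal (2 * Real.exp (-u)) = 2 := by
    have : ∀ u : ℝ, ENNReal.ofReal (2 * Real.exp (-u))
        = 2 * ENNReal.ofReal (Real.exp (-u)) := by
      intro u
      rw [ENNReal.ofReal_mul (by norm_num)]
      norm_num
    rw [lintegral_congr this, lintegral_const_mul' _ _ (by norm_num), lint_exp_one, mul_one]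
  rw [h1, lint_exp_one, mul_one]

lemma A_lim (hH1 : 1/2 < H) (hH2 : H < 1) :
    Tendsto (fun τ => ∫⁻ p, (Eset τ).indicator (Phi H τ) p ∂mu2) atTop (𝓝 1) := by
  have key := tendsto_lintegral_filter_of_dominated_convergence (μ := mu2)
    (F := fun τ => (Eset τ).indicator (Phi H τ))
    (f := fun p => ENNReal.ofReal (Real.exp (-p.1) * Real.exp (-p.2)))
    (l := atTop)
    (bound := fun p => ENNReal.ofReal (2 * Real.exp (-p.1)) * ENNReal.ofReal (Real.exp (-p.2)))
    ?_ ?_ ?_ ?_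
  · have hval : (∫⁻ p, ENNReal.ofReal (Real.exp (-p.1) * Real.exp (-p.2)) ∂mu2) = 1 := by
      have : ∀ p : ℝ × ℝ, ENNReal.ofReal (Real.exp (-p.1) * Real.exp (-p.2))
          = ENNReal.ofReal (Real.exp (-p.1)) * ENNReal.ofReal (Real.exp (-p.2)) :=
        fun p => ENNReal.ofReal_mul (Real.exp_pos _).le
      rw [lintegral_congr this, mu2]
      have hsplit : (∫⁻ p : ℝ × ℝ, ENNReal.ofReal (Real.exp (-p.1))
          * ENNReal.ofReal (Real.exp (-p.2))
          ∂((volume.restrict (Ioi 0)).prod (volume.restrict (Ioi 0))))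
          = (∫⁻ u in Ioi (0:ℝ), ENNReal.ofReal (Real.exp (-u)))
            * ∫⁻ v in Ioi (0:ℝ), ENNReal.ofReal (Real.exp (-v)) :=
        lintegral_prod_mul (f := fun u => ENNReal.ofReal (Real.exp (-u)))
          (g := fun v => ENNReal.ofReal (Real.exp (-v))) (by fun_prop) (by fun_prop)
      rw [hsplit, lint_exp_one]
      norm_num
    rwa [hval] at key
  · filter_upwards with τ
    refine Measurable.indicator ?_ (hE τ)
    unfold Phi
    fun_prop
  · filter_upwards [eventually_ge_atTop (1:ℝ)] with τ hτ
    filter_upwards [ae_mem_S] with p hp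
    rcases Classical.em (p ∈ Eset τ) with hmem | hmem
    · rw [indicator_of_mem hmem]
      obtain ⟨hu, hw⟩ := hp
      have hu0 : (0:ℝ) < p.1 := hu
      have hw0 : (0:ℝ) < p.2 := hw
      have hτ0 : (0:ℝ) < τ := by linarith
      have hEp : p.2 ≤ p.1 + τ/2 := hmem
      have h2 : τ/2 ≤ p.1 - p.2 + τ := by linarith
      have hpos : (0:ℝ) < τ/2 := by linarith
      have hkey : τ ^ (2 - 2*H) * |p.1 - p.2 + τ| ^ (2*H - 2) ≤ 2 := by
        rw [abs_of_pos (lt_of_lt_of_le hpos h2)]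
        have hmono : (p.1 - p.2 + τ) ^ (2*H - 2) ≤ (τ/2) ^ (2*H - 2) :=
          Real.rpow_le_rpow_of_nonpos hpos h2 (by linarith)
        have step1 : τ ^ (2 - 2*H) * (p.1 - p.2 + τ) ^ (2*H - 2)
            ≤ τ ^ (2 - 2*H) * (τ/2) ^ (2*H - 2) :=
          mul_le_mul_of_nonneg_left hmono (Real.rpow_nonneg hτ0.le _)
        have step2 : τ ^ (2 - 2*H) * (τ/2) ^ (2*H - 2) = 2 ^ (2 - 2*H) := by
          rw [Real.div_rpow hτ0.le (by norm_num)]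
          rw [show τ ^ (2 - 2*H) * (τ ^ (2*H - 2) / 2 ^ (2*H - 2))
            = (τ ^ (2 - 2*H) * τ ^ (2*H - 2)) / 2 ^ (2*H - 2) by ring]
          rw [← Real.rpow_add hτ0]
          norm_num
          rw [← Real.rpow_neg (by norm_num : (0:ℝ) ≤ 2)]
          ring_nf
        have step3 : (2:ℝ) ^ (2 - 2*H) ≤ 2 := by
          calc (2:ℝ) ^ (2 - 2*H) ≤ 2 ^ (1:ℝ) :=
            Real.rpow_le_rpow_of_exponent_le (by norm_num) (by linarith)
          _ = 2 := Real.rpow_one 2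
        calc τ ^ (2 - 2*H) * (p.1 - p.2 + τ) ^ (2*H - 2)
            ≤ τ ^ (2 - 2*H) * (τ/2) ^ (2*H - 2) := step1
          _ = 2 ^ (2 - 2*H) := step2
          _ ≤ 2 := step3
      rw [Phi, ← ENNReal.ofReal_mul (by positivity)]
      apply ENNReal.ofReal_le_ofReal
      have hnn : (0:ℝ) ≤ Real.exp (-p.1) * Real.exp (-p.2) := by positivity
      calc Real.exp (-p.1) * Real.exp (-p.2)
            * (τ ^ (2 - 2*H) * |p.1 - p.2 + τ| ^ (2*H - 2))
          ≤ Real.exp (-p.1) * Real.exp (-p.2) * 2 := mul_le_mul_of_nonneg_left hkey hnn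
        _ = 2 * Real.exp (-p.1) * Real.exp (-p.2) := by ring
    · rw [indicator_of_notMem hmem]
      exact zero_le
  · rw [bound_int]
    norm_num
  · filter_upwards with p
    apply (Phi_lim p).congr'
    filter_upwards [eventually_ge_atTop (2*(p.2 - p.1))] with τ hτ
    have hmem : p ∈ Eset τ := by
      show p.2 ≤ p.1 + τ/2
      linarith
    rw [indicator_of_mem hmem]

lemma B_le (hH1 : 1/2 < H) (hH2 : H < 1) {τ : ℝ} (hτ : 1 ≤ τ) :
    ∫⁻ p in (Eset τ)ᶜ, Phi H τ p ∂mu2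
      ≤ ENNReal.ofReal (τ ^ (2 - 2*H) * Real.exp (-(τ/4)))
          * ENNReal.ofReal (2 + 2/(2*H-1)) := by
  have hτ0 : (0:ℝ) < τ := by linarith
  set ψ : ℝ × ℝ → ℝ≥0∞ := fun p =>
    ENNReal.ofReal (τ ^ (2 - 2*H) * Real.exp (-(τ/4)))
      * (ENNReal.ofReal (Real.exp (-(3/2*p.1)))
        * ENNReal.ofReal (Real.exp (-(1/2*p.2)) * |p.2 - (p.1+τ)| ^ (2*H - 2))) with hψ
  have step1 : ∫⁻ p in (Eset τ)ᶜ, Phi H τ p ∂mu2 ≤ ∫⁻ p, ψ p ∂mu2 := by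
    rw [← lintegral_indicator (hE τ).compl]
    apply lintegral_mono_ae
    filter_upwards [ae_mem_S] with p hp
    rcases Classical.em (p ∈ (Eset τ)ᶜ) with hmem | hmem
    · rw [indicator_of_mem hmem]
      obtain ⟨hu, hw⟩ := hp
      have hu0 : (0:ℝ) < p.1 := hu
      have hw0 : (0:ℝ) < p.2 := hw
      have hgt : p.1 + τ/2 < p.2 := by
        have : ¬ (p.2 ≤ p.1 + τ/2) := hmem
        linarith [lt_of_not_ge this]
      simp only [hψ, Phi]
      rw [← ENNReal.ofReal_mul (by positivity), ← ENNReal.ofReal_mul (by positivity)]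
      apply ENNReal.ofReal_le_ofReal
      have habs : |p.1 - p.2 + τ| = |p.2 - (p.1+τ)| := by
        rw [show p.1 - p.2 + τ = -(p.2 - (p.1+τ)) by ring, abs_neg]
      rw [habs]
      have hC : (0:ℝ) ≤ τ ^ (2 - 2*H) * |p.2 - (p.1+τ)| ^ (2*H - 2) := by positivity
      have hexp : Real.exp (-p.1) * Real.exp (-p.2)
          ≤ Real.exp (-(τ/4)) * (Real.exp (-(3/2*p.1)) * Real.exp (-(1/2*p.2))) := by
        rw [← Real.exp_add, ← Real.exp_add, ← Real.exp_add]
        apply Real.exp_le_exp.2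
        linarith
      have := mul_le_mul_of_nonneg_right hexp hC
      calc Real.exp (-p.1) * Real.exp (-p.2)
            * (τ ^ (2 - 2*H) * |p.2 - (p.1+τ)| ^ (2*H - 2))
          ≤ Real.exp (-(τ/4)) * (Real.exp (-(3/2*p.1)) * Real.exp (-(1/2*p.2)))
            * (τ ^ (2 - 2*H) * |p.2 - (p.1+τ)| ^ (2*H - 2)) := this
        _ = τ ^ (2 - 2*H) * Real.exp (-(τ/4))
            * (Real.exp (-(3/2*p.1))
              * (Real.exp (-(1/2*p.2)) * |p.2 - (p.1+τ)| ^ (2*H - 2))) := by ring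
    · rw [indicator_of_notMem hmem]
      exact zero_le
  refine le_trans step1 ?_
  simp only [hψ]
  rw [lintegral_const_mul' _ _ ENNReal.ofReal_ne_top]
  refine mul_le_mul' le_rfl ?_
  rw [mu2, lintegral_prod _ (by fun_prop)]
  have hinner : ∀ u : ℝ,
      (∫⁻ w in Ioi (0:ℝ), ENNReal.ofReal (Real.exp (-(3/2*u)))
          * ENNReal.ofReal (Real.exp (-(1/2*w)) * |w - (u+τ)| ^ (2*H - 2)))
      ≤ ENNReal.ofReal (Real.exp (-(3/2*u))) * ENNReal.ofReal (2 + 2/(2*H-1)) := by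
    intro u
    rw [lintegral_const_mul' _ _ ENNReal.ofReal_ne_top]
    refine mul_le_mul' le_rfl ?_
    have := inner_bound hH1 hH2 (c := 1/2) (by norm_num) (u + τ)
    calc (∫⁻ w in Ioi (0:ℝ),
          ENNReal.ofReal (Real.exp (-(1/2*w)) * |w - (u+τ)| ^ (2*H - 2)))
        ≤ ENNReal.ofReal (1/(1/2:ℝ) + 2/(2*H-1)) := this
      _ = ENNReal.ofReal (2 + 2/(2*H-1)) := by norm_num
  calc (∫⁻ u in Ioi (0:ℝ), ∫⁻ w in Ioi (0:ℝ), ENNReal.ofReal (Real.exp (-(3/2*u)))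
        * ENNReal.ofReal (Real.exp (-(1/2*w)) * |w - (u+τ)| ^ (2*H - 2)))
      ≤ ∫⁻ u in Ioi (0:ℝ), ENNReal.ofReal (Real.exp (-(3/2*u)))
          * ENNReal.ofReal (2 + 2/(2*H-1)) := lintegral_mono hinner
    _ = (∫⁻ u in Ioi (0:ℝ), ENNReal.ofReal (Real.exp (-(3/2*u))))
        * ENNReal.ofReal (2 + 2/(2*H-1)) := lintegral_mul_const' _ _ ENNReal.ofReal_ne_top
    _ ≤ 1 * ENNReal.ofReal (2 + 2/(2*H-1)) := by
        refine mul_le_mul' ?_ le_rfl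
        rw [lint_exp (3/2) (by norm_num)]
        exact ENNReal.ofReal_le_one.2 (by norm_num)
    _ = ENNReal.ofReal (2 + 2/(2*H-1)) := one_mul _

lemma B_lim (hH1 : 1/2 < H) (hH2 : H < 1) :
    Tendsto (fun τ => ∫⁻ p in (Eset τ)ᶜ, Phi H τ p ∂mu2) atTop (𝓝 0) := by
  have hupper : Tendsto (fun τ : ℝ => ENNReal.ofReal (τ ^ (2 - 2*H) * Real.exp (-(τ/4)))
      * ENNReal.ofReal (2 + 2/(2*H-1))) atTop (𝓝 0) := by
    have hreal : Tendsto (fun τ : ℝ => τ ^ (2 - 2*H) * Real.exp (-(τ/4))) atTop (𝓝 0) := by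
      have := tendsto_rpow_mul_exp_neg_mul_atTop_nhds_zero (2 - 2*H) (1/4) (by norm_num)
      apply this.congr
      intro x
      congr 1
      congr 1
      ring
    have h1 : Tendsto (fun τ : ℝ => ENNReal.ofReal (τ ^ (2 - 2*H) * Real.exp (-(τ/4))))
        atTop (𝓝 0) := by
      have := (ENNReal.continuous_ofReal.tendsto 0).comp hreal
      simpa [Function.comp_def] using this
    have := ENNReal.Tendsto.mul_const (b := ENNReal.ofReal (2 + 2/(2*H-1))) h1
      (Or.inr ENNReal.ofReal_ne_top)
    simpa using this
  apply tendsto_of_tendsto_of_tendsto_of_le_of_le' tendsto_const_nhds hupper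
  · filter_upwards with τ using zero_le
  · filter_upwards [eventually_ge_atTop (1:ℝ)] with τ hτ using B_le hH1 hH2 hτ

lemma L_lim (hH1 : 1/2 < H) (hH2 : H < 1) :
    Tendsto (fun τ : ℝ => ENNReal.ofReal (τ ^ (2 - 2*H)) * G H τ) atTop (𝓝 1) := by
  have hsum : Tendsto (fun τ : ℝ =>
      (∫⁻ p, (Eset τ).indicator (Phi H τ) p ∂mu2)
        + ∫⁻ p in (Eset τ)ᶜ, Phi H τ p ∂mu2) atTop (𝓝 (1 + 0)) :=
    (A_lim hH1 hH2).add (B_lim hH1 hH2)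
  rw [add_zero] at hsum
  apply hsum.congr'
  filter_upwards [eventually_gt_atTop (0:ℝ)] with τ hτ
  rw [lintegral_indicator (hE τ), lintegral_add_compl (Phi H τ) (hE τ), Lprod hτ]

end Stmt7Aux

open Stmt7Aux in
theorem stmt_7 (H : ℝ) (hH1 : 1/2 < H) (hH2 : H < 1) :
    Filter.Tendsto
      (fun τ : ℝ => τ ^ (2 - 2*H) * CinftyH H τ *
        (∫⁻ u in Ioi (0:ℝ), ∫⁻ v in Ioi (0:ℝ),
            ENNReal.ofReal (Real.exp (-u) * Real.exp (-v) * |u - v| ^ (2*H - 2))).toReal)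
      Filter.atTop (nhds 1) ∧
    ¬ IntegrableOn (CinftyH H) (Ici (0:ℝ)) := by
  have hD_eq : (∫⁻ u in Ioi (0:ℝ), ∫⁻ v in Ioi (0:ℝ),
      ENNReal.ofReal (Real.exp (-u) * Real.exp (-v) * |u - v| ^ (2*H - 2))) = G H 0 := by
    rw [G]
    apply lintegral_congr fun u => lintegral_congr fun v => ?_
    rw [add_zero]
  have hDfin : G H 0 ≠ ⊤ :=
    (lt_of_le_of_lt (G_le hH1 hH2 0) ENNReal.ofReal_lt_top).ne
  have hDpos : 0 < (G H 0).toReal :=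
    ENNReal.toReal_pos (G_pos hH1 hH2).ne' hDfin
  have hlim : Filter.Tendsto
      (fun τ : ℝ => τ ^ (2 - 2*H) * CinftyH H τ *
        (∫⁻ u in Ioi (0:ℝ), ∫⁻ v in Ioi (0:ℝ),
            ENNReal.ofReal (Real.exp (-u) * Real.exp (-v) * |u - v| ^ (2*H - 2))).toReal)
      Filter.atTop (nhds 1) := by
    have h1 := L_lim hH1 hH2
    have h2 := (ENNReal.tendsto_toReal (by norm_num : (1:ℝ≥0∞) ≠ ⊤)).comp h1
    rw [ENNReal.toReal_one] at h2
    apply h2.congr'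
    filter_upwards [eventually_gt_atTop (0:ℝ)] with τ hτ
    show ((ENNReal.ofReal (τ ^ (2 - 2*H)) * G H τ)).toReal = _
    rw [hD_eq]
    unfold CinftyH
    rw [hD_eq, N_eq τ, ENNReal.toReal_mul, ENNReal.toReal_mul,
      ENNReal.toReal_ofReal (Real.exp_nonneg τ),
      ENNReal.toReal_ofReal (Real.rpow_nonneg hτ.le _)]
    rw [Real.exp_neg]
    field_simp
  refine ⟨hlim, ?_⟩
  intro hInt
  set c : ℝ := (G H 0).toReal with hc
  have hev : ∀ᶠ τ : ℝ in atTop, (1:ℝ)/2 < τ ^ (2 - 2*H) * CinftyH H τ *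
      (∫⁻ u in Ioi (0:ℝ), ∫⁻ v in Ioi (0:ℝ),
          ENNReal.ofReal (Real.exp (-u) * Real.exp (-v) * |u - v| ^ (2*H - 2))).toReal :=
    hlim.eventually_const_lt (by norm_num)
  obtain ⟨T, hT⟩ := eventually_atTop.1 hev
  set T' : ℝ := max T 1 with hT'
  have hT'1 : (1:ℝ) ≤ T' := le_max_right T 1
  have hT'0 : (0:ℝ) < T' := lt_of_lt_of_le one_pos hT'1
  have hsub : IntegrableOn (CinftyH H) (Ioi T') := by
    apply hInt.mono_set
    intro x hx
    exact le_of_lt (lt_of_lt_of_le hT'0 (le_of_lt hx))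
  have key : ∀ x ∈ Ioi T', x ^ (2*H - 2) / (2*c) ≤ CinftyH H x := by
    intro x hx
    have hx0 : (0:ℝ) < x := lt_trans hT'0 hx
    have h12 := hT x (le_trans (le_max_left T 1) (le_of_lt hx))
    rw [hD_eq, ← hc] at h12
    have hxp : (0:ℝ) < x ^ (2 - 2*H) := Real.rpow_pos_of_pos hx0 _
    have h3 : x ^ (2*H - 2) * x ^ (2 - 2*H) = 1 := by
      rw [← Real.rpow_add hx0]
      norm_num
    have hq : (0:ℝ) ≤ x ^ (2*H - 2) := Real.rpow_nonneg hx0.le _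
    rw [div_le_iff₀ (by positivity)]
    nlinarith [mul_le_mul_of_nonneg_left (le_of_lt h12) hq]
  have hmeas : AEStronglyMeasurable (fun x : ℝ => x ^ (2*H - 2) / (2*c))
      (volume.restrict (Ioi T')) := by
    apply Measurable.aestronglyMeasurable
    fun_prop
  have hint2 : IntegrableOn (fun x : ℝ => x ^ (2*H - 2) / (2*c)) (Ioi T') := by
    apply Integrable.mono' hsub hmeas
    filter_upwards [ae_restrict_mem measurableSet_Ioi] with x hx
    have hx0 : (0:ℝ) < x := lt_trans hT'0 hx
    rw [Real.norm_eq_abs, abs_of_nonneg (by positivity)]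
    exact key x hx
  have hint3 : IntegrableOn (fun x : ℝ => x ^ (2*H - 2)) (Ioi T') := by
    have h5 := hint2.const_mul (2*c)
    have heq : (fun x : ℝ => (2*c) * (x ^ (2*H - 2) / (2*c)))
        = fun x : ℝ => x ^ (2*H - 2) := by
      funext x
      rw [mul_div_cancel₀]
      positivity
    rwa [heq] at h5
  rw [integrableOn_Ioi_rpow_iff hT'0] at hint3
  linarith
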